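/- Let t > 0, let μ be a Borel probability measure on [0,∞) with μ({0}) = 0, and let φ : (0,∞) → [0,∞) be a function such that ∫_{[0,∞)} e^{−λu} dμ(u) = e^{−t·φ(λ)} for every λ > 0. Then ∫_1^∞ μ((u,∞)) · u^{−1} du ≤ t · ∫_0^1 φ(λ) · λ^{−1} dλ + e^{−1}. -/

import Mathlib

open MeasureTheory

section Aux

open Set ENNReal

private theorem stmt0_lemB (s : ℝ) (hs : 1 < s) :
    ENNReal.ofReal (Real.log s) ≤
      (∫⁻ l in Ioo (0:ℝ) 1, ENNReal.ofReal ((1 - Real.exp (-(l*s)))/l)) +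
        ENNReal.ofReal (Real.exp (-1)) := by
  have hs0 : 0 < s := by linarith
  have hinv : (0:ℝ) < 1/s := by positivity
  have hinv1 : 1/s ≤ 1 := by rw [div_le_one hs0]; linarith
  have huIcc : Set.uIcc (1/s) 1 = Set.Icc (1/s) 1 := Set.uIcc_of_le hinv1
  have hne : ∀ x ∈ Set.uIcc (1/s) 1, x ≠ 0 := by
    intro x hx
    rw [huIcc] at hx
    exact ne_of_gt (lt_of_lt_of_le hinv hx.1)
  have hcont1 : ContinuousOn (fun l : ℝ => l⁻¹) (Set.uIcc (1/s) 1) :=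
    ContinuousOn.inv₀ continuousOn_id hne
  have hcont2 : ContinuousOn (fun l : ℝ => (1 - Real.exp (-(l*s)))/l) (Set.uIcc (1/s) 1) := by
    apply ContinuousOn.div (by fun_prop) continuousOn_id hne
  have hcont3 : ContinuousOn (fun l : ℝ => s * Real.exp (-(l*s))) (Set.uIcc (1/s) 1) := by
    fun_prop
  have hi2 : IntervalIntegrable (fun l : ℝ => (1 - Real.exp (-(l*s)))/l) volume (1/s) 1 :=
    hcont2.intervalIntegrable
  have hi3 : IntervalIntegrable (fun l : ℝ => s * Real.exp (-(l*s))) volume (1/s) 1 :=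
    hcont3.intervalIntegrable
  have hlog : Real.log s = ∫ l in (1/s)..1, l⁻¹ := by
    rw [integral_inv]
    · rw [one_div_one_div]
    · rw [huIcc]; rintro ⟨h1, -⟩; linarith
  have hpt : ∀ l ∈ Set.Icc (1/s) 1, l⁻¹ ≤ (1 - Real.exp (-(l*s)))/l + s * Real.exp (-(l*s)) := by
    intro l hl
    have hl0 : 0 < l := lt_of_lt_of_le hinv hl.1
    have h1 : Real.exp (-(l*s)) / l ≤ s * Real.exp (-(l*s)) := by
      rw [div_le_iff₀ hl0]
      have : 1 ≤ s * l := by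
        rw [mul_comm]
        calc (1:ℝ) = (1/s) * s := by field_simp
        _ ≤ l * s := by apply mul_le_mul_of_nonneg_right hl.1 hs0.le
      nlinarith [Real.exp_pos (-(l*s))]
    have : l⁻¹ = (1 - Real.exp (-(l*s)))/l + Real.exp (-(l*s))/l := by
      field_simp
      ring
    linarith
  have hmono : ∫ l in (1/s)..1, l⁻¹ ≤
      ∫ l in (1/s)..1, ((1 - Real.exp (-(l*s)))/l + s * Real.exp (-(l*s))) := by
    apply intervalIntegral.integral_mono_on hinv1 hcont1.intervalIntegrable (hi2.add hi3)
    exact hpt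
  have hexp : ∫ l in (1/s)..1, s * Real.exp (-(l*s)) = Real.exp (-1) - Real.exp (-s) := by
    have hd : ∀ l ∈ Set.uIcc (1/s) 1, HasDerivAt (fun l : ℝ => -Real.exp (-(l*s)))
        (s * Real.exp (-(l*s))) l := by
      intro l _
      have h : HasDerivAt (fun l : ℝ => -(l*s)) (-s) l := by
        simpa using ((hasDerivAt_id l).mul_const s).fun_neg
      have := (h.exp).fun_neg
      exact this.congr_deriv (by ring)
    rw [intervalIntegral.integral_eq_sub_of_hasDerivAt hd hi3]
    simp only [one_mul, one_div, inv_mul_cancel₀ hs0.ne']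
    ring
  have key : Real.log s ≤ (∫ l in (1/s)..1, (1 - Real.exp (-(l*s)))/l) + Real.exp (-1) := by
    rw [hlog]
    rw [intervalIntegral.integral_add hi2 hi3] at hmono
    have := Real.exp_pos (-s)
    rw [hexp] at hmono
    linarith
  calc ENNReal.ofReal (Real.log s)
      ≤ ENNReal.ofReal ((∫ l in (1/s)..1, (1 - Real.exp (-(l*s)))/l) + Real.exp (-1)) :=
        ENNReal.ofReal_le_ofReal key
    _ ≤ ENNReal.ofReal (∫ l in (1/s)..1, (1 - Real.exp (-(l*s)))/l)
          + ENNReal.ofReal (Real.exp (-1)) :=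
        ENNReal.ofReal_add_le
    _ ≤ (∫⁻ l in Ioo (0:ℝ) 1, ENNReal.ofReal ((1 - Real.exp (-(l*s)))/l))
          + ENNReal.ofReal (Real.exp (-1)) := by
        gcongr
        rw [intervalIntegral.integral_of_le hinv1, integral_Ioc_eq_integral_Ioo]
        rw [ofReal_integral_eq_lintegral_ofReal]
        · apply lintegral_mono_set
          intro x hx
          exact ⟨lt_of_lt_of_le hinv (le_of_lt hx.1), hx.2⟩
        · exact (intervalIntegrable_iff_integrableOn_Ioo_of_le hinv1).mp hi2
        · rw [Filter.EventuallyLE, ae_restrict_iff' measurableSet_Ioo]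
          filter_upwards with l
          intro hl
          have hl0 : 0 < l := lt_of_lt_of_le hinv hl.1.le
          simp only [Pi.zero_apply]
          apply div_nonneg _ hl0.le
          have : Real.exp (-(l*s)) ≤ 1 := Real.exp_le_one_iff.mpr (by nlinarith)
          linarith

private theorem stmt0_lemInner (s : ℝ) :
    ∫⁻ u in Set.Ioi (1:ℝ), (Set.Ioi u).indicator (fun _ => (1:ℝ≥0∞)) s * (ENNReal.ofReal u)⁻¹
      = Set.indicator (Set.Ioi 1) (fun x => ENNReal.ofReal (Real.log x)) s := by
  have h1 : ∀ u : ℝ, (Set.Ioi u).indicator (fun _ => (1:ℝ≥0∞)) s * (ENNReal.ofReal u)⁻¹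
      = (Set.Iio s).indicator (fun u => (ENNReal.ofReal u)⁻¹) u := by
    intro u
    by_cases h : u < s <;> simp [Set.indicator, h]
  simp_rw [h1]
  rw [lintegral_indicator measurableSet_Iio, Measure.restrict_restrict measurableSet_Iio,
    Set.Iio_inter_Ioi]
  by_cases hs : 1 < s
  · rw [Set.indicator_of_mem (by exact hs)]
    have hcong : ∫⁻ u in Set.Ioo (1:ℝ) s, (ENNReal.ofReal u)⁻¹
        = ∫⁻ u in Set.Ioo (1:ℝ) s, ENNReal.ofReal u⁻¹ := by
      apply setLIntegral_congr_fun_ae measurableSet_Ioo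
      filter_upwards with u hu
      rw [← ENNReal.ofReal_inv_of_pos (by linarith [hu.1])]
    rw [hcong, ← ofReal_integral_eq_lintegral_ofReal]
    · congr 1
      rw [← integral_Ioc_eq_integral_Ioo, ← intervalIntegral.integral_of_le hs.le,
        integral_inv (by rw [Set.uIcc_of_le hs.le]; rintro ⟨h0, -⟩; linarith), div_one]
    · have : IntervalIntegrable (fun u : ℝ => u⁻¹) volume 1 s := by
        apply ContinuousOn.intervalIntegrable
        apply ContinuousOn.inv₀ continuousOn_id
        intro x hx
        rw [Set.uIcc_of_le hs.le] at hx
        simp only [id_eq]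
        intro h; rw [h] at hx; linarith [hx.1]
      exact (intervalIntegrable_iff_integrableOn_Ioo_of_le hs.le).mp this
    · rw [Filter.EventuallyLE, ae_restrict_iff' measurableSet_Ioo]
      filter_upwards with u hu
      have : (0:ℝ) < u := by linarith [hu.1]
      simp only [Pi.zero_apply]
      positivity
  · rw [Set.indicator_of_notMem (by exact hs)]
    have : Set.Ioo (1:ℝ) s = ∅ := Set.Ioo_eq_empty (by push_neg at hs; intro h; linarith)
    simp [this]

private theorem stmt0_lemA (μ : Measure ℝ) [IsProbabilityMeasure μ] :
    ∫⁻ u in Set.Ioi (1:ℝ), μ (Set.Ioi u) / ENNReal.ofReal u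
      = ∫⁻ s, (Set.Ioi (1:ℝ)).indicator (fun x => ENNReal.ofReal (Real.log x)) s ∂μ := by
  have step1 : ∫⁻ u in Set.Ioi (1:ℝ), μ (Set.Ioi u) / ENNReal.ofReal u
      = ∫⁻ u in Set.Ioi (1:ℝ), ∫⁻ s, (Set.Ioi u).indicator (fun _ => (1:ℝ≥0∞)) s
          * (ENNReal.ofReal u)⁻¹ ∂μ := by
    apply setLIntegral_congr_fun_ae measurableSet_Ioi
    filter_upwards with u hu
    rw [lintegral_mul_const' _ _ (by
      simp only [ne_eq, ENNReal.inv_eq_top, ENNReal.ofReal_eq_zero, not_le]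
      linarith [Set.mem_Ioi.mp hu])]
    rw [lintegral_indicator measurableSet_Ioi, setLIntegral_one, div_eq_mul_inv]
  rw [step1, lintegral_lintegral_swap]
  · exact lintegral_congr fun s => stmt0_lemInner s
  · have heq : (Function.uncurry fun u s =>
        (Set.Ioi u).indicator (fun _ => (1:ℝ≥0∞)) s * (ENNReal.ofReal u)⁻¹)
        = fun p : ℝ × ℝ => {q : ℝ × ℝ | q.1 < q.2}.indicator (fun _ => (1:ℝ≥0∞)) p
            * (ENNReal.ofReal p.1)⁻¹ := by
      ext p
      by_cases h : p.1 < p.2 <;>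
        simp [Function.uncurry, Set.indicator, h]
    rw [heq]
    apply Measurable.aemeasurable
    apply Measurable.mul
    · exact Measurable.indicator measurable_const
        (measurableSet_lt measurable_fst measurable_snd)
    · exact (ENNReal.measurable_ofReal.comp measurable_fst).inv

private theorem stmt0_lemC (t : ℝ) (ht : 0 < t) (μ : Measure ℝ) [IsProbabilityMeasure μ]
    (hsupp : μ (Set.Iio 0) = 0)
    (φ : ℝ → ℝ)
    (hlaplace : ∀ l, 0 < l →
      ∫ u in Set.Ici (0:ℝ), Real.exp (-(l * u)) ∂μ = Real.exp (-(t * φ l))) :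
    ∫⁻ s in Set.Ici (0:ℝ),
        (∫⁻ l in Set.Ioo (0:ℝ) 1, ENNReal.ofReal ((1 - Real.exp (-(l*s)))/l)) ∂μ
      ≤ ENNReal.ofReal t * ∫⁻ l in Set.Ioo (0:ℝ) 1, ENNReal.ofReal (φ l / l) := by
  have hIci : μ (Set.Ici (0:ℝ)) = 1 := by
    rw [← Set.compl_Iio, measure_compl measurableSet_Iio (measure_ne_top μ _), hsupp,
      measure_univ, tsub_zero]
  rw [lintegral_lintegral_swap]
  · have hbd : ∀ l ∈ Set.Ioo (0:ℝ) 1,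
        (∫⁻ s in Set.Ici (0:ℝ), ENNReal.ofReal ((1 - Real.exp (-(l*s)))/l) ∂μ)
          ≤ ENNReal.ofReal t * ENNReal.ofReal (φ l / l) := by
      intro l hl
      have hl0 : 0 < l := hl.1
      have hexpint : Integrable (fun s : ℝ => Real.exp (-(l*s))) (μ.restrict (Set.Ici 0)) := by
        constructor
        · exact Continuous.aestronglyMeasurable (by fun_prop)
        · apply HasFiniteIntegral.of_bounded (C := 1)
          rw [ae_restrict_iff' measurableSet_Ici]
          filter_upwards with s hs
          rw [Real.norm_eq_abs, abs_of_pos (Real.exp_pos _)]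
          apply Real.exp_le_one_iff.mpr
          have : (0:ℝ) ≤ s := hs
          nlinarith
      have hint : Integrable (fun s : ℝ => (1 - Real.exp (-(l*s)))/l) (μ.restrict (Set.Ici 0)) :=
        ((integrable_const 1).sub hexpint).div_const l
      have hnn : 0 ≤ᵐ[μ.restrict (Set.Ici 0)] fun s : ℝ => (1 - Real.exp (-(l*s)))/l := by
        rw [Filter.EventuallyLE, ae_restrict_iff' measurableSet_Ici]
        filter_upwards with s hs
        have hs0 : (0:ℝ) ≤ s := hs
        simp only [Pi.zero_apply]
        apply div_nonneg _ hl0.le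
        have : Real.exp (-(l*s)) ≤ 1 := Real.exp_le_one_iff.mpr (by nlinarith)
        linarith
      rw [← ofReal_integral_eq_lintegral_ofReal hint hnn]
      have hval : ∫ s in Set.Ici (0:ℝ), (1 - Real.exp (-(l*s)))/l ∂μ
          = (1 - Real.exp (-(t * φ l)))/l := by
        rw [integral_div, integral_sub (integrable_const 1) hexpint, hlaplace l hl0]
        simp [hIci, Measure.real]
      rw [hval, ← ENNReal.ofReal_mul ht.le, ← mul_div_assoc]
      apply ENNReal.ofReal_le_ofReal
      gcongr
      have := Real.add_one_le_exp (-(t * φ l))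
      linarith
    calc ∫⁻ l in Set.Ioo (0:ℝ) 1, (∫⁻ s in Set.Ici (0:ℝ),
            ENNReal.ofReal ((1 - Real.exp (-(l*s)))/l) ∂μ)
        ≤ ∫⁻ l in Set.Ioo (0:ℝ) 1, ENNReal.ofReal t * ENNReal.ofReal (φ l / l) := by
          apply setLIntegral_mono' measurableSet_Ioo hbd
      _ = ENNReal.ofReal t * ∫⁻ l in Set.Ioo (0:ℝ) 1, ENNReal.ofReal (φ l / l) :=
          lintegral_const_mul' _ _ ENNReal.ofReal_ne_top
  · apply Measurable.aemeasurable
    have : (Function.uncurry fun (s l : ℝ) => ENNReal.ofReal ((1 - Real.exp (-(l*s)))/l))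
        = fun p : ℝ × ℝ => ENNReal.ofReal ((1 - Real.exp (-(p.2*p.1)))/p.2) := rfl
    rw [this]
    apply Measurable.ennreal_ofReal
    apply Measurable.div _ measurable_snd
    fun_prop

end Aux

/-- Lemma 2.2 of the paper: if `μ` is the law of a subordinator at time `t > 0`
(a probability measure on `[0,∞)` not charging `{0}`) with Laplace exponent `φ`,
then `∫_1^∞ μ((u,∞))/u du ≤ t ∫_0^1 φ(λ)/λ dλ + e⁻¹` (inequality in `[0,∞]`). -/
theorem stmt0 (t : ℝ) (ht : 0 < t) (μ : Measure ℝ) [IsProbabilityMeasure μ]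
    (hsupp : μ (Set.Iio 0) = 0) (h0 : μ ({0} : Set ℝ) = 0)
    (φ : ℝ → ℝ) (hφ : ∀ l, 0 < l → 0 ≤ φ l)
    (hlaplace : ∀ l, 0 < l →
      ∫ u in Set.Ici (0:ℝ), Real.exp (-(l * u)) ∂μ = Real.exp (-(t * φ l))) :
    ∫⁻ u in Set.Ioi (1:ℝ), μ (Set.Ioi u) / ENNReal.ofReal u ≤
      ENNReal.ofReal t * (∫⁻ l in Set.Ioo (0:ℝ) 1, ENNReal.ofReal (φ l / l)) +
        ENNReal.ofReal (Real.exp (-1)) := by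
  rw [stmt0_lemA μ]
  have hpt : ∀ s : ℝ, (Set.Ioi (1:ℝ)).indicator (fun x => ENNReal.ofReal (Real.log x)) s
      ≤ (Set.Ici (0:ℝ)).indicator
          (fun s => ∫⁻ l in Set.Ioo (0:ℝ) 1, ENNReal.ofReal ((1 - Real.exp (-(l*s)))/l)) s
        + ENNReal.ofReal (Real.exp (-1)) := by
    intro s
    by_cases hs : 1 < s
    · rw [Set.indicator_of_mem (by exact hs),
        Set.indicator_of_mem (show s ∈ Set.Ici (0:ℝ) by simp; linarith)]
      exact stmt0_lemB s hs
    · rw [Set.indicator_of_notMem (by exact hs)]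
      exact zero_le
  calc ∫⁻ s, (Set.Ioi (1:ℝ)).indicator (fun x => ENNReal.ofReal (Real.log x)) s ∂μ
      ≤ ∫⁻ s, ((Set.Ici (0:ℝ)).indicator
          (fun s => ∫⁻ l in Set.Ioo (0:ℝ) 1, ENNReal.ofReal ((1 - Real.exp (-(l*s)))/l)) s
          + ENNReal.ofReal (Real.exp (-1))) ∂μ := lintegral_mono hpt
    _ = (∫⁻ s, (Set.Ici (0:ℝ)).indicator
          (fun s => ∫⁻ l in Set.Ioo (0:ℝ) 1, ENNReal.ofReal ((1 - Real.exp (-(l*s)))/l)) s ∂μ)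
          + ENNReal.ofReal (Real.exp (-1)) := by
        rw [lintegral_add_right _ measurable_const, lintegral_const, measure_univ, mul_one]
    _ = (∫⁻ s in Set.Ici (0:ℝ),
          (∫⁻ l in Set.Ioo (0:ℝ) 1, ENNReal.ofReal ((1 - Real.exp (-(l*s)))/l)) ∂μ)
          + ENNReal.ofReal (Real.exp (-1)) := by
        rw [lintegral_indicator measurableSet_Ici]
    _ ≤ ENNReal.ofReal t * (∫⁻ l in Set.Ioo (0:ℝ) 1, ENNReal.ofReal (φ l / l))
          + ENNReal.ofReal (Real.exp (-1)) := by
        gcongr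
        exact stmt0_lemC t ht μ hsupp φ hlaplace
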